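/- Let S be a string with unique first character ♯ and unique last character $. Then the set of minimal rare words for S that are absent from S equals the set of minimal absent words for S; equivalently MRW(S) \ EBF(S) = MAW(S). -/

import Mathlib

/-- Number of occurrences of `w` as a substring of `S` (for `w = ε` this is `|S| + 1`). -/
def occ {α : Type*} [DecidableEq α] (S w : List α) : ℕ :=
  (List.range (S.length + 1)).countP
    (fun i => decide (i + w.length ≤ S.length ∧ (S.drop i).take w.length = w))

/-- `aub` is a minimal rare word for `S`. -/
def IsMRW {α : Type*} [DecidableEq α] (S : List α) (a : α) (u : List α) (b : α) : Prop :=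
  occ S (a :: (u ++ [b])) < occ S (a :: u) ∧ occ S (a :: (u ++ [b])) < occ S (u ++ [b])

/-- `aub` is a minimal absent word for `S`. -/
def IsMAW {α : Type*} [DecidableEq α] (S : List α) (a : α) (u : List α) (b : α) : Prop :=
  occ S (a :: (u ++ [b])) = 0 ∧ 1 ≤ occ S (a :: u) ∧ 1 ≤ occ S (u ++ [b])

/-- `aub` is an extended bispecial factor for `S`. -/
def IsEBF {α : Type*} (S : List α) (a : α) (u : List α) (b : α) : Prop :=
  (a :: (u ++ [b])) <:+: S ∧
  (∃ a' : α, a' ≠ a ∧ (a' :: u) <:+: S) ∧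
  (∃ b' : α, b' ≠ b ∧ (u ++ [b']) <:+: S)

private lemma exists_missed {p q : ℕ → Bool} {l : List ℕ}
    (h : l.countP p < l.countP q) : ∃ i ∈ l, q i = true ∧ p i = false := by
  by_contra hc
  push_neg at hc
  have : l.countP q ≤ l.countP p := by
    apply List.countP_mono_left
    intro x hx hqx
    have := hc x hx hqx
    simpa using this
  omega

private lemma occ_pos_iff {α : Type*} [DecidableEq α] (S w : List α) :
    0 < occ S w ↔ w <:+: S := by
  rw [occ, List.countP_pos_iff]
  constructor
  · rintro ⟨i, _, hp⟩
    simp only [decide_eq_true_eq] at hp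
    obtain ⟨hlen, htake⟩ := hp
    refine ⟨S.take i, (S.drop i).drop w.length, ?_⟩
    calc S.take i ++ w ++ (S.drop i).drop w.length
        = S.take i ++ ((S.drop i).take w.length ++ (S.drop i).drop w.length) := by
          rw [htake, List.append_assoc]
      _ = S.take i ++ S.drop i := by rw [List.take_append_drop]
      _ = S := List.take_append_drop i S
  · rintro ⟨s, t, hst⟩
    refine ⟨s.length, ?_, ?_⟩
    · rw [List.mem_range]
      have := congrArg List.length hst
      simp at this
      omega
    · simp only [decide_eq_true_eq]
      constructor
      · have := congrArg List.length hst
        simp at this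
        omega
      · rw [← hst, List.append_assoc, List.drop_left, List.take_left]

private lemma right_ext {α : Type*} [DecidableEq α] {S w : List α} {b : α}
    (h : occ S (w ++ [b]) < occ S w) :
    w <:+ S ∨ ∃ b', b' ≠ b ∧ (w ++ [b']) <:+: S := by
  obtain ⟨i, hi, hq, hp⟩ := exists_missed h
  rw [List.mem_range] at hi
  simp only [decide_eq_true_eq] at hq
  simp only [decide_eq_false_iff_not, List.length_append, List.length_singleton,
    not_and] at hp
  obtain ⟨hlen, htake⟩ := hq
  rcases eq_or_lt_of_le hlen with heq | hlt
  · left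
    have hdl : (S.drop i).length = w.length := by
      rw [List.length_drop]; omega
    have : (S.drop i).take w.length = S.drop i :=
      List.take_of_length_le (by omega)
    rw [this] at htake
    rw [← htake]
    exact List.drop_suffix i S
  · right
    have hib : i + w.length < S.length := hlt
    have hne := hp (by omega)
    set b' := S[i + w.length] with hb'
    have hkey : (S.drop i).take (w.length + 1) = w ++ [b'] := by
      rw [List.take_succ, htake, List.getElem?_drop]
      simp [hb', hib]
    refine ⟨b', ?_, ?_⟩
    · intro hbb
      apply hne
      rw [hkey, hbb]
    · rw [← hkey]
      exact ((S.drop i).take_prefix (w.length + 1)).isInfix.trans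
        (List.drop_suffix i S).isInfix

private lemma occ_cons {α : Type*} [DecidableEq α] (S : List α) (a : α) (w : List α) :
    occ S (a :: w) = (List.range (S.length + 1)).countP
      (fun j => decide (1 ≤ j ∧ (j - 1) + (a :: w).length ≤ S.length ∧
        (S.drop (j - 1)).take (a :: w).length = a :: w)) := by
  have step1 : occ S (a :: w) = (List.range S.length).countP
      (fun i => decide (i + (a :: w).length ≤ S.length ∧
        (S.drop i).take (a :: w).length = a :: w)) := by
    rw [occ, List.range_succ, List.countP_append]
    have hn : ¬ (S.length + (a :: w).length ≤ S.length) := by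
      simp only [List.length_cons]; omega
    simp [hn]
  rw [step1, List.range_succ_eq_map, List.countP_cons, List.countP_map]
  have h0 : decide (1 ≤ (0:ℕ) ∧ (0 - 1) + (a :: w).length ≤ S.length ∧
      (S.drop (0 - 1)).take (a :: w).length = a :: w) = false := by simp
  rw [h0]
  simp only [Bool.false_eq_true, if_false, add_zero]
  apply List.countP_congr
  intro x hx
  simp only [Function.comp_apply, decide_eq_true_eq, Nat.succ_eq_add_one,
    Nat.add_sub_cancel]
  constructor
  · intro hh
    exact ⟨by omega, hh⟩
  · intro hh
    exact hh.2

private lemma left_ext {α : Type*} [DecidableEq α] {S : List α} {a : α} {w : List α}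
    (h : occ S (a :: w) < occ S w) :
    w <+: S ∨ ∃ a', a' ≠ a ∧ (a' :: w) <:+: S := by
  rw [occ_cons, occ] at h
  obtain ⟨j, hj, hq, hp⟩ := exists_missed h
  rw [List.mem_range] at hj
  simp only [decide_eq_true_eq] at hq
  simp only [decide_eq_false_iff_not, not_and, List.length_cons] at hp
  obtain ⟨hlen, htake⟩ := hq
  rcases Nat.eq_zero_or_pos j with h0 | h1
  · left
    subst h0
    rw [List.drop_zero] at htake
    rw [← htake]
    exact List.take_prefix _ _
  · right
    set i := j - 1 with hi
    have hij : j = i + 1 := by omega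
    have hiS : i < S.length := by omega
    have hne := hp h1 (by omega)
    set a' := S[i] with ha'
    have hkey : (S.drop i).take (w.length + 1) = a' :: w := by
      rw [List.drop_eq_getElem_cons hiS, List.take_succ_cons, ← hij, htake]
    refine ⟨a', ?_, ?_⟩
    · intro haa
      apply hne
      rw [hkey, haa]
    · rw [← hkey]
      exact ((S.drop i).take_prefix (w.length + 1)).isInfix.trans
        (List.drop_suffix i S).isInfix

private lemma two_le_count {α : Type*} [DecidableEq α] {S l₁ l₂ l₃ : List α} {c : α}
    (h : S = l₁ ++ l₂ ++ l₃) (h1 : c ∈ l₁) (h2 : c ∈ l₂) : 2 ≤ S.count c := by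
  subst h
  rw [List.count_append, List.count_append]
  have c1 : 0 < l₁.count c := List.count_pos_iff.mpr h1
  have c2 : 0 < l₂.count c := List.count_pos_iff.mpr h2
  omega

private lemma head_of_prefix {α : Type*} {l S : List α} (hl : l ≠ []) (hS : S ≠ [])
    (h : l <+: S) : l.head hl = S.head hS := by
  obtain ⟨t, rfl⟩ := h
  rw [List.head_append]
  simp [hl]

private lemma getLast_of_suffix {α : Type*} {l S : List α} (hl : l ≠ []) (hS : S ≠ [])
    (h : l <:+ S) : l.getLast hl = S.getLast hS := by
  obtain ⟨t, rfl⟩ := h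
  rw [List.getLast_append]
  simp [hl]

theorem mrw_diff_ebf_eq_maw {α : Type*} [DecidableEq α]
    (S : List α) (hS : S ≠ [])
    (hfirst : S.count (S.head hS) = 1)
    (hlast : S.count (S.getLast hS) = 1) :
    ∀ (a b : α) (u : List α),
      (IsMRW S a u b ∧ ¬ IsEBF S a u b) ↔ IsMAW S a u b := by
  intro a b u
  constructor
  · rintro ⟨⟨h1, h2⟩, hne⟩
    have h1' : occ S ((a :: u) ++ [b]) < occ S (a :: u) := by
      rw [List.cons_append]; exact h1
    refine ⟨?_, by omega, by omega⟩
    by_contra h0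
    have hpos : 0 < occ S (a :: (u ++ [b])) := by omega
    obtain ⟨s, t, hst⟩ := (occ_pos_iff S _).mp hpos
    have hR := right_ext h1'
    have hL := left_ext h2
    rcases hR with hsuf | ⟨b', hb', hb'inf⟩
    · -- a :: u is a suffix of S, but it also occurs followed by b : getLast occurs twice
      have hdec : S = (s ++ (a :: u)) ++ (b :: t) ++ [] := by
        rw [← hst]; simp
      have hcu : (a :: u).getLast (by simp) = S.getLast hS :=
        getLast_of_suffix (by simp) hS hsuf
      have hbt : (b :: t).getLast (by simp) = S.getLast hS := by
        refine getLast_of_suffix (by simp) hS ⟨s ++ (a :: u), ?_⟩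
        rw [← hst]; simp
      have hmem1 : S.getLast hS ∈ s ++ (a :: u) := by
        rw [← hcu]
        exact List.mem_append_right _ (List.getLast_mem _)
      have hmem2 : S.getLast hS ∈ b :: t := by
        rw [← hbt]
        exact List.getLast_mem _
      have : 2 ≤ S.count (S.getLast hS) :=
        two_le_count hdec hmem1 (by simpa using hmem2)
      omega
    rcases hL with hpre | ⟨a', ha', ha'inf⟩
    · -- u ++ [b] is a prefix of S, but it also occurs preceded by a : head occurs twice
      have hdec : S = (s ++ [a]) ++ (u ++ [b]) ++ t := by
        rw [← hst]; simp
      have hcu : (u ++ [b]).head (by simp) = S.head hS :=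
        head_of_prefix (by simp) hS hpre
      have hsa : (s ++ [a]).head (by simp) = S.head hS := by
        refine head_of_prefix (by simp) hS ⟨(u ++ [b]) ++ t, ?_⟩
        rw [← hst]; simp
      have hmem1 : S.head hS ∈ s ++ [a] := by
        rw [← hsa]; exact List.head_mem _
      have hmem2 : S.head hS ∈ u ++ [b] := by
        rw [← hcu]; exact List.head_mem _
      have : 2 ≤ S.count (S.head hS) := two_le_count hdec hmem1 hmem2
      omega
    · -- both proper extensions exist : EBF holds, contradiction
      apply hne
      refine ⟨⟨s, t, hst⟩, ⟨a', ha', ?_⟩, ⟨b', hb', ?_⟩⟩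
      · have hp2 : (a' :: u) <+: (a' :: (u ++ [b])) := ⟨[b], by simp⟩
        exact hp2.isInfix.trans ha'inf
      · have hs2 : (u ++ [b']) <:+ (a :: (u ++ [b'])) := ⟨[a], rfl⟩
        rw [List.cons_append] at hb'inf
        exact hs2.isInfix.trans hb'inf
  · rintro ⟨h0, h1, h2⟩
    refine ⟨⟨by omega, by omega⟩, ?_⟩
    rintro ⟨hinf, -⟩
    have : 0 < occ S (a :: (u ++ [b])) := (occ_pos_iff S _).mpr hinf
    omega
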